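/- Let n, r, R be such that r ≤ R ≤ n and let m be the sequence (1,...,r−1, R+1,...,n) if n−R+r−1 is even, or (1,...,r−1, R+1,...,n−1) if n−R+r−2 is even. Then for any even-size subset α ⊆ [n], α ≥ m in the Pfaffian poset order if and only if |α ∩ {1,...,R}| ≤ r−1. Equivalently, the order ideal of Π(Z) cogenerated by m consists exactly of the even subsets having at least r elements ≤ R. -/

import Mathlib

/-- The `i`-th smallest element of `A` (as a natural number), defaulting to `0`. -/
def sget {n : ℕ} (A : Finset (Fin n)) (i : ℕ) : ℕ :=
  ((A.sort (· ≤ ·)).map Fin.val).getD i 0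

/-- The order on subsets of `[n]`: `A ≤ B` iff `|A| ≥ |B|` and entrywise domination. -/
def sle {n : ℕ} (A B : Finset (Fin n)) : Prop :=
  B.card ≤ A.card ∧ ∀ i < B.card, sget A i ≤ sget B i

namespace Stmt17Aux

/-- The sorted list of values of a finset of `Fin n`. -/
def vlist {n : ℕ} (A : Finset (Fin n)) : List ℕ := (A.sort (· ≤ ·)).map Fin.val

lemma sget_eq {n : ℕ} (A : Finset (Fin n)) (i : ℕ) : sget A i = (vlist A).getD i 0 := rfl

lemma vlist_length {n : ℕ} (A : Finset (Fin n)) : (vlist A).length = A.card := by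
  simp [vlist, Finset.length_sort]

lemma vlist_sorted {n : ℕ} (A : Finset (Fin n)) : (vlist A).Pairwise (· < ·) :=
  List.Pairwise.map Fin.val (fun a b h => by exact_mod_cast h) (Finset.sortedLT_sort A).pairwise

lemma vlist_mem {n : ℕ} (A : Finset (Fin n)) (x : ℕ) :
    x ∈ vlist A ↔ ∃ a ∈ A, (a : ℕ) = x := by
  simp [vlist, Finset.mem_sort]

lemma vlist_filter_length {n : ℕ} (A : Finset (Fin n)) (R : ℕ) :
    ((vlist A).filter (fun x => x < R)).length
      = (A.filter (fun x : Fin n => (x : ℕ) < R)).card := by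
  have h1 : (vlist A).filter (fun x => x < R)
      = ((A.sort (· ≤ ·)).filter (fun a : Fin n => (a : ℕ) < R)).map Fin.val := by
    rw [vlist, List.filter_map]; rfl
  rw [h1, List.length_map]
  have hnd : ((A.sort (· ≤ ·)).filter (fun a : Fin n => (a : ℕ) < R)).Nodup :=
    (Finset.sort_nodup A _).filter _
  rw [← List.toFinset_card_of_nodup hnd, List.toFinset_filter, Finset.sort_toFinset]
  congr 1
  ext x
  simp

lemma grow {l : List ℕ} (hl : l.Pairwise (· < ·)) :
    ∀ (d i : ℕ), i + d < l.length → l.getD i 0 + d ≤ l.getD (i + d) 0 := by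
  intro d
  induction d with
  | zero => intro i h; simp
  | succ d ih =>
    intro i h
    have h1 : i + d < l.length := by omega
    have h2 := ih i h1
    have h3 : l.getD (i + d) 0 < l.getD (i + d + 1) 0 := by
      rw [List.getD_eq_getElem l 0 h1, List.getD_eq_getElem l 0 (by omega : i + d + 1 < l.length)]
      have := List.pairwise_iff_get.mp hl ⟨i + d, h1⟩ ⟨i + d + 1, by omega⟩
        (Fin.mk_lt_mk.mpr (by omega))
      simpa using this
    have : i + (d + 1) = i + d + 1 := by omega
    rw [this]
    omega

lemma filt_le {l : List ℕ} (hl : l.Pairwise (· < ·)) {R k : ℕ} (hk : k < l.length)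
    (hR : R ≤ l.getD k 0) : (l.filter (fun x => x < R)).length ≤ k := by
  have hsplit : l = l.take k ++ l.drop k := (List.take_append_drop k l).symm
  have hnil : (l.drop k).filter (fun x => x < R) = [] := by
    rw [List.filter_eq_nil_iff]
    intro x hx
    obtain ⟨j, hj, rfl⟩ := List.mem_iff_getElem.mp hx
    have hjl : k + j < l.length := by
      have := hj; simp [List.length_drop] at this; omega
    simp only [decide_eq_true_eq, not_lt]
    rw [List.getElem_drop]
    have hg := grow hl j k hjl
    rw [List.getD_eq_getElem l 0 hjl] at hg
    omega
  conv_lhs => rw [hsplit]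
  rw [List.filter_append, hnil, List.append_nil]
  calc ((l.take k).filter (fun x => x < R)).length ≤ (l.take k).length :=
        List.length_filter_le _ _
    _ ≤ k := by simp [List.length_take]

lemma filt_ge {l : List ℕ} (hl : l.Pairwise (· < ·)) {R k : ℕ} (hk : k < l.length)
    (hR : l.getD k 0 < R) : k + 1 ≤ (l.filter (fun x => x < R)).length := by
  have hself : (l.take (k + 1)).filter (fun x => x < R) = l.take (k + 1) := by
    rw [List.filter_eq_self]
    intro x hx
    obtain ⟨j, hj, rfl⟩ := List.mem_iff_getElem.mp hx
    have hjk : j ≤ k := by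
      have := hj; simp [List.length_take] at this; omega
    simp only [decide_eq_true_eq]
    rw [List.getElem_take]
    have hg := grow hl (k - j) j (by omega)
    have he : j + (k - j) = k := by omega
    rw [he] at hg
    rw [List.getD_eq_getElem l 0 (by omega : j < l.length)] at hg
    omega
  have hsplit : l = l.take (k + 1) ++ l.drop (k + 1) := (List.take_append_drop _ l).symm
  conv_rhs => rw [hsplit]
  rw [List.filter_append, hself, List.length_append, List.length_take]
  omega

lemma vlist_eq_mlist {n r' R k : ℕ} (hrR : r' ≤ R) (hkn : R + k ≤ n)
    (pred : Fin n → Prop) [DecidablePred pred]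
    (hpred : ∀ x : Fin n, pred x ↔ ((x : ℕ) < r' ∨ (R ≤ (x : ℕ) ∧ (x : ℕ) < R + k))) :
    vlist (Finset.univ.filter pred) = List.range r' ++ List.range' R k := by
  haveI : Std.Antisymm (α := ℕ) (· < ·) := ⟨fun a b h h' => absurd h' (not_lt.mpr h.le)⟩
  have hsort : (List.range r' ++ List.range' R k).Pairwise (· < ·) := by
    rw [List.pairwise_append]
    refine ⟨(List.sortedLT_range r').pairwise, (List.sortedLT_range' R k one_ne_zero).pairwise, ?_⟩
    intro a ha b hb
    rw [List.mem_range] at ha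
    rw [List.mem_range'_1] at hb
    omega
  refine List.Perm.eq_of_pairwise' (vlist_sorted _) hsort ?_
  rw [List.perm_ext_iff_of_nodup (vlist_sorted _).nodup hsort.nodup]
  intro x
  rw [vlist_mem]
  simp only [List.mem_append, List.mem_range, List.mem_range'_1, Finset.mem_filter,
    Finset.mem_univ, true_and]
  constructor
  · rintro ⟨a, ha, rfl⟩
    exact (hpred a).1 ha
  · intro h
    have hx : x < n := by rcases h with h | h <;> omega
    refine ⟨⟨x, hx⟩, (hpred _).2 ?_, rfl⟩
    simpa using h

lemma mlist_length (r' R k : ℕ) : (List.range r' ++ List.range' R k).length = r' + k := by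
  simp

lemma mlist_getD_lt {r' R k i : ℕ} (hi : i < r') :
    (List.range r' ++ List.range' R k).getD i 0 = i := by
  rw [List.getD_eq_getElem _ 0 (by simp; omega),
    List.getElem_append_left (by simpa using hi)]
  simp

lemma mlist_getD_ge {r' R k i : ℕ} (hi : r' ≤ i) (hik : i < r' + k) :
    (List.range r' ++ List.range' R k).getD i 0 = R + (i - r') := by
  rw [List.getD_eq_getElem _ 0 (by simp; omega),
    List.getElem_append_right (by simpa using hi)]
  simp [List.getElem_range']

lemma card_ge {n R : ℕ} :
    (Finset.univ.filter (fun x : Fin n => R ≤ (x : ℕ))).card = n - R := by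
  have him : (Finset.univ.filter (fun x : Fin n => R ≤ (x : ℕ))).image Fin.val
      = Finset.Ico R n := by
    ext x
    simp only [Finset.mem_image, Finset.mem_filter, Finset.mem_univ, true_and, Finset.mem_Ico]
    constructor
    · rintro ⟨a, ha, rfl⟩; exact ⟨ha, a.isLt⟩
    · rintro ⟨h1, h2⟩; exact ⟨⟨x, h2⟩, h1, rfl⟩
  rw [← Nat.card_Ico R n, ← him, Finset.card_image_of_injective _ Fin.val_injective]

lemma main_forward {n r' R k : ℕ} (m : Finset (Fin n))
    (hm : vlist m = List.range r' ++ List.range' R k)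
    (α : Finset (Fin n)) (h : sle m α) :
    (α.filter fun x : Fin n => (x : ℕ) < R).card ≤ r' := by
  obtain ⟨hc, hd⟩ := h
  have hmc : m.card = r' + k := by rw [← vlist_length, hm, mlist_length]
  rw [← vlist_filter_length]
  by_cases h1 : α.card ≤ r'
  · calc ((vlist α).filter (fun x => x < R)).length ≤ (vlist α).length :=
        List.length_filter_le _ _
      _ ≤ r' := by rw [vlist_length]; exact h1
  · push_neg at h1
    apply filt_le (vlist_sorted α) (by rw [vlist_length]; omega)
    have hk1 : r' < r' + k := by omega
    have hdd := hd r' (by omega)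
    rw [sget_eq, sget_eq, hm, mlist_getD_ge (le_refl r') hk1] at hdd
    omega

lemma main_backward {n r' R k : ℕ} (m : Finset (Fin n))
    (hm : vlist m = List.range r' ++ List.range' R k)
    (α : Finset (Fin n)) (hc : (α.filter fun x : Fin n => (x : ℕ) < R).card ≤ r')
    (hcard : α.card ≤ r' + k) : sle m α := by
  have hmc : m.card = r' + k := by rw [← vlist_length, hm, mlist_length]
  constructor
  · omega
  · intro i hi
    rw [sget_eq, sget_eq, hm]
    have hil : i < (vlist α).length := by rw [vlist_length]; exact hi
    by_cases h1 : i < r'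
    · rw [mlist_getD_lt h1]
      have hg := grow (vlist_sorted α) i 0 (by simpa using hil)
      simp only [Nat.zero_add] at hg
      omega
    · push_neg at h1
      rw [mlist_getD_ge h1 (by omega)]
      set c := (α.filter fun x : Fin n => (x : ℕ) < R).card with hcdef
      have hcl : c < (vlist α).length := by rw [vlist_length]; omega
      have hRc : R ≤ (vlist α).getD c 0 := by
        by_contra hlt
        push_neg at hlt
        have hfg := filt_ge (vlist_sorted α) hcl hlt
        rw [vlist_filter_length] at hfg
        omega
      have hgrow := grow (vlist_sorted α) (i - c) c (by omega)
      have he : c + (i - c) = i := by omega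
      rw [he] at hgrow
      omega

end Stmt17Aux

open Stmt17Aux in
open Finset in
/-- Let `m = (1,…,r−1, R+1,…,n)` if `n−R+r−1` is even, and `(1,…,r−1, R+1,…,n−1)`
otherwise (0-indexed: `{0,…,r−2} ∪ {R,…,n−1}` resp. `{0,…,r−2} ∪ {R,…,n−2}`).
Then for every even-cardinality `α ⊆ [n]`: `α ≥ m` iff `α` has at most `r−1`
elements among `{1,…,R}`.  Equivalently, the order ideal of `Π(Z)` cogenerated by
`m` consists of the even subsets with at least `r` elements `≤ R`. -/
theorem stmt_17 (n r R : ℕ) (h1r : 1 ≤ r) (hrR : r ≤ R) (hRn : R ≤ n)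
    (α : Finset (Fin n)) (hα : Even α.card) :
    sle (if Even (n - R + r - 1)
          then Finset.univ.filter fun x : Fin n => (x : ℕ) < r - 1 ∨ R ≤ (x : ℕ)
          else Finset.univ.filter fun x : Fin n =>
            (x : ℕ) < r - 1 ∨ (R ≤ (x : ℕ) ∧ (x : ℕ) < n - 1)) α ↔
      (α.filter fun x : Fin n => (x : ℕ) < R).card ≤ r - 1 := by
  obtain ⟨t, ht⟩ := hα
  have hsplit := Finset.card_filter_add_card_filter_not
    (s := α) (fun x : Fin n => (x : ℕ) < R)
  have hle : (α.filter fun x : Fin n => ¬ (x : ℕ) < R).card ≤ n - R := by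
    calc (α.filter fun x : Fin n => ¬ (x : ℕ) < R).card
        ≤ (Finset.univ.filter fun x : Fin n => R ≤ (x : ℕ)).card := by
          apply Finset.card_le_card
          intro x hx
          simp only [Finset.mem_filter, Finset.mem_univ, true_and, not_lt] at hx ⊢
          exact hx.2
      _ = n - R := card_ge
  by_cases hcase : Even (n - R + r - 1)
  · rw [if_pos hcase]
    have hm : vlist (Finset.univ.filter fun x : Fin n => (x : ℕ) < r - 1 ∨ R ≤ (x : ℕ))
        = List.range (r - 1) ++ List.range' R (n - R) := by
      apply vlist_eq_mlist (by omega) (by omega)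
      intro x
      have hx := x.isLt
      constructor <;> intro h <;> omega
    constructor
    · exact main_forward _ hm α
    · intro hc
      exact main_backward _ hm α hc (by omega)
  · rw [if_neg hcase]
    obtain ⟨s, hs⟩ := Nat.not_even_iff_odd.mp hcase
    have hm : vlist (Finset.univ.filter fun x : Fin n =>
          (x : ℕ) < r - 1 ∨ (R ≤ (x : ℕ) ∧ (x : ℕ) < n - 1))
        = List.range (r - 1) ++ List.range' R (n - 1 - R) := by
      apply vlist_eq_mlist (by omega) (by omega)
      intro x
      have hx := x.isLt
      constructor <;> intro h <;> omega
    constructor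
    · exact main_forward _ hm α
    · intro hc
      exact main_backward _ hm α hc (by omega)
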